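/- Let λ, μ > 0. Let p : [0,∞) → ℝ be continuously differentiable, nondecreasing, with p(0) = 0 and 0 ≤ p(t) ≤ 1 for all t, and set β(t) = μ·exp(−λ∫_0^t (1 − p(x)) dx). Assume the Volterra equation β(t) = p'(t) + ∫_0^t β(t−y) p'(y) dy holds for all t ≥ 0. Then β(t) ≤ μ − λ·p(t) for all t ≥ 0; in particular p(t) ≤ min(1, μ/λ) for all t ≥ 0. -/

import Mathlib

open Set MeasureTheory intervalIntegral


/-- For a continuously differentiable, nondecreasing lifetime
distribution `p` on `[0,∞)` with `p 0 = 0`, `0 ≤ p ≤ 1`, with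
`β t = μ * exp (-λ ∫_0^t (1 - p x) dx)` satisfying the Volterra equation
`β t = p' t + ∫_0^t β (t - y) p' y dy`, one has `β t ≤ μ - λ p t` for all
`t ≥ 0`, and in particular `p t ≤ min 1 (μ/λ)`. -/
theorem stmt_2 (lam mu : ℝ) (hlam : 0 < lam) (hmu : 0 < mu)
    (p p' β : ℝ → ℝ)
    (hderiv : ∀ t ∈ Set.Ici (0 : ℝ), HasDerivWithinAt p (p' t) (Set.Ici 0) t)
    (hcont : ContinuousOn p' (Set.Ici 0))
    (hmono : MonotoneOn p (Set.Ici 0))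
    (hp0 : p 0 = 0)
    (hbound : ∀ t ∈ Set.Ici (0 : ℝ), 0 ≤ p t ∧ p t ≤ 1)
    (hβ : ∀ t ∈ Set.Ici (0 : ℝ),
      β t = mu * Real.exp (-(lam * ∫ x in (0 : ℝ)..t, (1 - p x))))
    (hvolterra : ∀ t ∈ Set.Ici (0 : ℝ),
      β t = p' t + ∫ y in (0 : ℝ)..t, β (t - y) * p' y) :
    (∀ t ∈ Set.Ici (0 : ℝ), β t ≤ mu - lam * p t) ∧
      ∀ t ∈ Set.Ici (0 : ℝ), p t ≤ min 1 (mu / lam) := by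
  set I : ℝ → ℝ := fun t => ∫ x in (0:ℝ)..t, (1 - p x) with hIdef
  have hpcont : ContinuousOn p (Set.Ici 0) := fun t ht => (hderiv t ht).continuousWithinAt
  have h1p : ContinuousOn (fun x => 1 - p x) (Set.Ici 0) := continuousOn_const.sub hpcont
  have hIccsub : ∀ s t : ℝ, 0 ≤ s → Set.Icc s t ⊆ Set.Ici 0 :=
    fun s t hs x hx => le_trans hs hx.1
  have hint : ∀ s t : ℝ, 0 ≤ s → s ≤ t →
      IntervalIntegrable (fun x => 1 - p x) volume s t := by
    intro s t hs hst
    apply (h1p.mono ?_).intervalIntegrable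
    rw [Set.uIcc_of_le hst]; exact hIccsub s t hs
  have hImono : ∀ s t : ℝ, 0 ≤ s → s ≤ t → I s ≤ I t := by
    intro s t hs hst
    have h1 : I s + ∫ x in s..t, (1 - p x) = I t :=
      intervalIntegral.integral_add_adjacent_intervals (hint 0 s le_rfl hs) (hint s t hs hst)
    have h2 : 0 ≤ ∫ x in s..t, (1 - p x) :=
      intervalIntegral.integral_nonneg hst
        (fun u hu => by have := (hbound u (le_trans hs hu.1)).2; linarith)
    linarith
  have hI0 : I 0 = 0 := intervalIntegral.integral_same
  have hβnn : ∀ t ∈ Set.Ici (0:ℝ), 0 ≤ β t := fun t ht => by rw [hβ t ht]; positivity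
  have hβanti : ∀ s t : ℝ, 0 ≤ s → s ≤ t → β t ≤ β s := by
    intro s t hs hst
    rw [hβ s hs, hβ t (le_trans hs hst)]
    have h := hImono s t hs hst
    have : Real.exp (-(lam * I t)) ≤ Real.exp (-(lam * I s)) := by
      apply Real.exp_le_exp.2; nlinarith
    nlinarith
  have hβ0 : β 0 = mu := by
    rw [hβ 0 Set.self_mem_Ici]; simp
  -- p' nonneg
  have hp'nn : ∀ t ∈ Set.Ici (0:ℝ), 0 ≤ p' t := by
    intro t ht
    have h := (hderiv t ht).mono (Set.Ici_subset_Ici.2 ht)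
    rw [hasDerivWithinAt_iff_tendsto_slope] at h
    rw [Set.Ici_sdiff_left] at h
    refine ge_of_tendsto h ?_
    filter_upwards [self_mem_nhdsWithin] with s hs
    have hs' : t < s := hs
    rw [slope_def_field]
    apply div_nonneg _ (by linarith)
    have := hmono ht (le_trans ht hs'.le) hs'.le
    linarith
  -- FTC for p
  have hFTCp : ∀ t ∈ Set.Ici (0:ℝ), (∫ y in (0:ℝ)..t, p' y) = p t := by
    intro t ht
    have := intervalIntegral.integral_eq_sub_of_hasDeriv_right_of_le ht
      (hpcont.mono (hIccsub 0 t le_rfl))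
      (fun x hx => (hderiv x hx.1.le).mono (fun y hy => le_trans hx.1.le (le_of_lt hy)))
      ((hcont.mono ?_).intervalIntegrable)
    · rw [this, hp0, sub_zero]
    · rw [Set.uIcc_of_le ht]; exact hIccsub 0 t le_rfl
  -- continuity of I on Ici 0
  have hIcont : ContinuousOn I (Set.Ici 0) := by
    intro t ht
    have ht0 : (0:ℝ) ≤ t := ht
    have hT : t < t + 1 := by linarith
    have hi : IntegrableOn (fun x => 1 - p x) (Set.uIcc 0 (t+1)) volume := by
      rw [Set.uIcc_of_le (by linarith : (0:ℝ) ≤ t + 1)]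
      exact (h1p.mono (hIccsub 0 (t+1) le_rfl)).integrableOn_compact isCompact_Icc
    have h := (continuousOn_primitive_interval hi) t
      (by rw [Set.uIcc_of_le (by linarith : (0:ℝ) ≤ t + 1)]; exact ⟨ht, by linarith⟩)
    refine ContinuousWithinAt.mono_of_mem_nhdsWithin h ?_
    rw [Set.uIcc_of_le (by linarith : (0:ℝ) ≤ t + 1)]
    have : Set.Icc (0:ℝ) (t+1) = Set.Ici 0 ∩ Set.Iic (t+1) := (Set.Ici_inter_Iic).symm
    rw [this]
    exact Filter.inter_mem self_mem_nhdsWithin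
      (mem_nhdsWithin_of_mem_nhds (Iic_mem_nhds hT))
  have hβcont : ContinuousOn β (Set.Ici 0) := by
    apply ContinuousOn.congr (f := fun t => mu * Real.exp (-(lam * I t))) ?_ ?_
    · exact continuousOn_const.mul (((continuousOn_const.mul hIcont).neg).rexp)
    · exact fun t ht => hβ t ht
  -- key inequality
  have hkey : ∀ t ∈ Set.Ici (0:ℝ), p' t ≤ (1 - p t) * β t := by
    intro t ht
    have hv := hvolterra t ht
    have hmono_int : β t * p t ≤ ∫ y in (0:ℝ)..t, β (t - y) * p' y := by
      have h1 : (∫ y in (0:ℝ)..t, β t * p' y) = β t * p t := by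
        rw [intervalIntegral.integral_const_mul, hFTCp t ht]
      rw [← h1]
      have hintg1 : IntervalIntegrable (fun y => β t * p' y) volume 0 t := by
        apply ContinuousOn.intervalIntegrable
        rw [Set.uIcc_of_le ht]
        exact continuousOn_const.mul (hcont.mono (hIccsub 0 t le_rfl))
      have hintg2 : IntervalIntegrable (fun y => β (t - y) * p' y) volume 0 t := by
        apply ContinuousOn.intervalIntegrable
        rw [Set.uIcc_of_le ht]
        refine ContinuousOn.mul ?_ (hcont.mono (hIccsub 0 t le_rfl))
        apply hβcont.comp (continuous_const.sub continuous_id).continuousOn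
        intro y hy; exact sub_nonneg.2 hy.2
      refine intervalIntegral.integral_mono_on ht hintg1 hintg2 ?_
      intro y hy
      have hpy : 0 ≤ p' y := hp'nn y hy.1
      have : β t ≤ β (t - y) := hβanti (t - y) t (sub_nonneg.2 hy.2) (by linarith [hy.1])
      nlinarith
    have hpt := (hbound t ht).1
    nlinarith [hβnn t ht]
  -- derivative of β on interior
  have hβderiv : ∀ t ∈ Set.Ioi (0:ℝ), HasDerivAt β (-(lam * (1 - p t)) * β t) t := by
    intro t ht
    have ht' : (0:ℝ) ≤ t := le_of_lt ht
    have hIt : HasDerivAt I (1 - p t) t := by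
      apply intervalIntegral.integral_hasDerivAt_right (hint 0 t le_rfl ht')
      · exact ContinuousOn.stronglyMeasurableAtFilter isOpen_Ioi (h1p.mono Set.Ioi_subset_Ici_self) t ht
      · exact (h1p t ht').continuousAt (Ici_mem_nhds ht)
    have hg : HasDerivAt (fun u => mu * Real.exp (-(lam * I u)))
        (mu * (Real.exp (-(lam * I t)) * -(lam * (1 - p t)))) t := by
      exact (((hIt.const_mul lam).neg).exp).const_mul mu
    have heq : β =ᶠ[nhds t] fun u => mu * Real.exp (-(lam * I u)) := by
      filter_upwards [Ici_mem_nhds ht] with u hu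
      exact hβ u hu
    have := hg.congr_of_eventuallyEq heq
    have e : -(lam * (1 - p t)) * β t = mu * (Real.exp (-(lam * I t)) * -(lam * (1 - p t))) := by
      rw [hβ t ht']; ring
    rw [e]; exact this
  -- F monotone
  set F : ℝ → ℝ := fun t => mu - β t - lam * p t with hFdef
  have hFcont : ContinuousOn F (Set.Ici 0) :=
    (continuousOn_const.sub hβcont).sub (continuousOn_const.mul hpcont)
  have hFmono : MonotoneOn F (Set.Ici 0) := by
    apply monotoneOn_of_hasDerivWithinAt_nonneg (convex_Ici 0) hFcont
      (f' := fun t => 0 - -(lam * (1 - p t)) * β t - lam * p' t)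
    · intro x hx
      rw [interior_Ici] at hx ⊢
      have h1 : HasDerivWithinAt β (-(lam * (1 - p x)) * β x) (Set.Ioi 0) x :=
        (hβderiv x hx).hasDerivWithinAt
      have h2 : HasDerivWithinAt p (p' x) (Set.Ioi 0) x :=
        (hderiv x (Set.Ioi_subset_Ici_self hx)).mono Ioi_subset_Ici_self
      exact ((hasDerivWithinAt_const x _ mu).sub h1).sub ((h2.const_mul lam))
    · intro x hx
      rw [interior_Ici] at hx
      have := hkey x (Set.Ioi_subset_Ici_self hx)
      nlinarith [hlam.le]
  have hF0 : F 0 = 0 := by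
    rw [hFdef]; simp [hβ0, hp0]
  have main : ∀ t ∈ Set.Ici (0:ℝ), β t ≤ mu - lam * p t := by
    intro t ht
    have := hFmono (self_mem_Ici) ht ht
    rw [hF0] at this
    simp only [hFdef] at this
    linarith
  refine ⟨main, fun t ht => ?_⟩
  have h1 := main t ht
  have h2 := hβnn t ht
  have h3 := (hbound t ht).2
  refine le_min h3 ?_
  rw [le_div_iff₀ hlam]
  nlinarith
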